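/- Let T−1 = 2^{L−1} with L ≥ 2, and let Z̲_{it}, X̲_{it} ∈ ℝ^{P̲} (i = 1,…,n; t = 2,…,T) be such that Q̲_{1,1} = (n(T−1))^{−1}Σ_{i,t}Z̲_{it}X̲_{it}' and all Q̲_{l,m} = (n(T−1))^{−1}Σ_{i,t}Z̲_{it}X̲_{it}'·H_{l,m}(t)² (l = 2,…,L; m = 1,…,2^{l−1}) are symmetric positive definite. Define A_{1,1} = Q̲_{1,1}^{−1/2}, A_{l,2k−1} = Q̲_{l,2k−1}^{−1}(Q̲_{l,2k−1}^{−1}+Q̲_{l,2k}^{−1})^{−1/2}, and A_{l,2k} = Q̲_{l,2k}^{−1}(Q̲_{l,2k−1}^{−1}+Q̲_{l,2k}^{−1})^{−1/2}, using symmetric positive definite square roots. Then the resulting basis matrices W_{l,k}(t) satisfy the orthonormality conditions (A) and (B): (n(T−1))^{−1}Σ_{i=1}^{n}Σ_{t=2}^{T} W_{l,k}(t)'Z̲_{it}X̲_{it}'W_{l',k'}(t) equals the identity matrix I_{P̲×P̲} if (l,k) = (l',k') and the zero matrix if (l,k) ≠ (l',k'). -/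

import Mathlib

/-!
The structure-adapted choice of the matrices `A_{l,k}` satisfies the
orthonormality conditions (A) and (B) (Section 2.3 of "A Wavelet Method for
Panel Models with Jump Discontinuities in the Parameters").
-/

open Matrix Finset

namespace SAWOrtho

/-- Univariate indicator `I_{l,m}(t)` (relative to the top level `L`). -/
def Ind (L l m t : ℕ) : ℝ :=
  if 2 ^ (L - l) * (m - 1) + 1 ≤ t ∧ t ≤ 2 ^ (L - l) * m then 1 else 0

/-- `H_{l,m}(t) = √(2^{l-2}) · I_{l,m}(t-1)`. -/
noncomputable def Hfun (L l m t : ℕ) : ℝ :=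
  Real.sqrt (2 ^ (l - 2)) * Ind L l m (t - 1)

/-- Number of translations at level `l`:  `K_1 = 1`, `K_l = 2^{l-2}`. -/
def Kl (l : ℕ) : ℕ := 2 ^ (l - 2)

/-- Inverse of the unique symmetric positive definite square root of a
symmetric positive definite matrix, i.e. `M^{-1/2}`; junk value `1` if `M` is
not positive definite. -/
noncomputable def invSqrt {d : ℕ} (M : Matrix (Fin d) (Fin d) ℝ) :
    Matrix (Fin d) (Fin d) ℝ := by
  classical exact if h : M.PosDef then (open scoped MatrixOrder in CFC.sqrt M)⁻¹ else 1

variable {Pb : ℕ}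

/-- Empirical matrices `Q̲_{l,m} = (n(T-1))⁻¹ Σ_{i,t} Z̲_{it} X̲_{it}' H_{l,m}(t)²`
(for `l = m = 1` this is `Q̲_{1,1} = (n(T-1))⁻¹ Σ_{i,t} Z̲_{it} X̲_{it}'`, since
`H_{1,1} ≡ 1` on the sample range `t = 2,…,T` with `T = 2^{L-1}+1`). -/
noncomputable def Qmat (n L : ℕ) (Z X : ℕ → ℕ → Fin Pb → ℝ) (l m : ℕ) :
    Matrix (Fin Pb) (Fin Pb) ℝ :=
  ((n * (2 ^ (L - 1)) : ℕ) : ℝ)⁻¹ •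
    ∑ i ∈ Finset.range n, ∑ t ∈ Finset.Icc 2 (2 ^ (L - 1) + 1),
      (Hfun L l m t) ^ 2 • Matrix.vecMulVec (Z i t) (X i t)

/-- The structure-adapting matrices:  `A_{1,1} = Q̲_{1,1}^{-1/2}` and, for
`l ≥ 2`, `A_{l,2k-1} = Q̲_{l,2k-1}⁻¹ (Q̲_{l,2k-1}⁻¹ + Q̲_{l,2k}⁻¹)^{-1/2}`,
`A_{l,2k} = Q̲_{l,2k}⁻¹ (Q̲_{l,2k-1}⁻¹ + Q̲_{l,2k}⁻¹)^{-1/2}`. -/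
noncomputable def Amat (n L : ℕ) (Z X : ℕ → ℕ → Fin Pb → ℝ) (l m : ℕ) :
    Matrix (Fin Pb) (Fin Pb) ℝ :=
  if l = 1 then invSqrt (Qmat n L Z X 1 1)
  else (Qmat n L Z X l m)⁻¹ *
    invSqrt ((Qmat n L Z X l (2 * ((m + 1) / 2) - 1))⁻¹ +
      (Qmat n L Z X l (2 * ((m + 1) / 2)))⁻¹)

/-- Basis matrices `W_{1,1}(t) = A_{1,1}` and, for `l ≥ 2`,
`W_{l,k}(t) = A_{l,2k-1} H_{l,2k-1}(t) - A_{l,2k} H_{l,2k}(t)`. -/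
noncomputable def Wmat (n L : ℕ) (Z X : ℕ → ℕ → Fin Pb → ℝ) (l k t : ℕ) :
    Matrix (Fin Pb) (Fin Pb) ℝ :=
  if l = 1 then Amat n L Z X 1 1
  else Hfun L l (2 * k - 1) t • Amat n L Z X l (2 * k - 1)
       - Hfun L l (2 * k) t • Amat n L Z X l (2 * k)

end SAWOrtho

open SAWOrtho

/-! ### Auxiliary lemmas -/

namespace SAWOrtho

section MatrixAlg

variable {d : ℕ}

open scoped MatrixOrder

lemma sqrt_det_isUnit {M : Matrix (Fin d) (Fin d) ℝ} (h : M.PosDef) :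
    IsUnit (CFC.sqrt M).det := by
  have h1 : IsUnit ((CFC.sqrt M) * (CFC.sqrt M)).det := by
    rw [CFC.sqrt_mul_sqrt_self M (Matrix.nonneg_iff_posSemidef.mpr h.posSemidef)]; exact h.det_pos.ne'.isUnit
  rw [Matrix.det_mul, isUnit_mul_self_iff] at h1
  exact h1

lemma invSqrt_symm {M : Matrix (Fin d) (Fin d) ℝ} (h : M.PosDef) :
    (invSqrt M)ᵀ = invSqrt M := by
  rw [invSqrt, dif_pos h, transpose_nonsing_inv]
  congr 1
  have := (CFC.sqrt_nonneg M).isSelfAdjoint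
  rwa [IsSelfAdjoint, Matrix.star_eq_conjTranspose, Matrix.conjTranspose_eq_transpose_of_trivial] at this

lemma invSqrt_mul_self_mul {M : Matrix (Fin d) (Fin d) ℝ} (h : M.PosDef) :
    invSqrt M * M * invSqrt M = 1 := by
  have key : M = (CFC.sqrt M) * (CFC.sqrt M) := (CFC.sqrt_mul_sqrt_self M (Matrix.nonneg_iff_posSemidef.mpr h.posSemidef)).symm
  rw [invSqrt, dif_pos h]
  calc ((CFC.sqrt M))⁻¹ * M * ((CFC.sqrt M))⁻¹
      = ((CFC.sqrt M))⁻¹ * ((CFC.sqrt M) * (CFC.sqrt M)) *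
        ((CFC.sqrt M))⁻¹ := by rw [← key]
    _ = (((CFC.sqrt M))⁻¹ * (CFC.sqrt M)) *
        ((CFC.sqrt M) * ((CFC.sqrt M))⁻¹) := by
        simp only [Matrix.mul_assoc]
    _ = 1 := by
        rw [Matrix.nonsing_inv_mul _ (sqrt_det_isUnit h),
          Matrix.mul_nonsing_inv _ (sqrt_det_isUnit h), Matrix.one_mul]

lemma posdef_transpose_eq {M : Matrix (Fin d) (Fin d) ℝ} (h : M.PosDef) : Mᵀ = M := by
  have := h.isHermitian
  rwa [Matrix.IsHermitian, Matrix.conjTranspose_eq_transpose_of_trivial] at this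

end MatrixAlg

section Scalar

lemma Ind_zero_or_one (L l m t : ℕ) : Ind L l m t = 0 ∨ Ind L l m t = 1 := by
  unfold Ind; split_ifs <;> simp

/-- Same level, different translations: disjoint supports. -/
lemma Ind_mul_Ind_same_level {L l a b : ℕ} (hab : a ≠ b) (t : ℕ) :
    Ind L l a t * Ind L l b t = 0 := by
  unfold Ind
  split_ifs with h1 h2 h2 <;> try ring
  exfalso
  rcases Nat.lt_or_ge a b with hlt | hge
  · have : 2 ^ (L - l) * a ≤ 2 ^ (L - l) * (b - 1) := Nat.mul_le_mul_left _ (by omega)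
    omega
  · have hlt : b < a := lt_of_le_of_ne hge (Ne.symm hab)
    have : 2 ^ (L - l) * b ≤ 2 ^ (L - l) * (a - 1) := Nat.mul_le_mul_left _ (by omega)
    omega

/-- Nested dyadic supports: under the containment condition the support of
`(l'', m'')` is inside the support of `(l, m)`. -/
lemma Ind_support_subset {L l l'' m m'' : ℕ} (hll : l ≤ l'') (hlL : l'' ≤ L)
    (hc1 : 2 ^ (l'' - l) * (m - 1) < m'') (hc2 : m'' ≤ 2 ^ (l'' - l) * m)
    (t : ℕ) (ht : Ind L l'' m'' t = 1) : Ind L l m t = 1 := by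
  unfold Ind at *
  have hD : 2 ^ (L - l) = 2 ^ (l'' - l) * 2 ^ (L - l'') := by
    rw [← pow_add]; congr 1; omega
  set D := 2 ^ (l'' - l)
  set P := 2 ^ (L - l'')
  split_ifs at ht with h1
  · rw [if_pos]
    obtain ⟨ha, hb⟩ := h1
    constructor
    · have hmm : P * (D * (m - 1)) ≤ P * (m'' - 1) := Nat.mul_le_mul_left _ (by omega)
      have he : 2 ^ (L - l) * (m - 1) = P * (D * (m - 1)) := by rw [hD]; ring
      omega
    · have hmm : P * m'' ≤ P * (D * m) := Nat.mul_le_mul_left _ (by omega)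
      calc t ≤ P * m'' := hb
        _ ≤ P * (D * m) := hmm
        _ = 2 ^ (L - l) * m := by rw [hD]; ring
  · simp at ht

/-- Disjointness when the containment condition fails. -/
lemma Ind_mul_Ind_disjoint {L l l'' m m'' : ℕ} (hll : l ≤ l'') (hlL : l'' ≤ L)
    (hc : ¬(2 ^ (l'' - l) * (m - 1) < m'' ∧ m'' ≤ 2 ^ (l'' - l) * m))
    (t : ℕ) : Ind L l m t * Ind L l'' m'' t = 0 := by
  unfold Ind
  split_ifs with h1 h2 h2 <;> try ring
  exfalso
  have hD : 2 ^ (L - l) = 2 ^ (l'' - l) * 2 ^ (L - l'') := by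
    rw [← pow_add]; congr 1; omega
  set D := 2 ^ (l'' - l)
  set P := 2 ^ (L - l'')
  push_neg at hc
  rcases Nat.lt_or_ge (D * (m - 1)) m'' with hlt | hge
  · have h3 := hc hlt
    have hmm : P * (D * m) ≤ P * (m'' - 1) := Nat.mul_le_mul_left _ (by omega)
    have h4 : 2 ^ (L - l) * m ≤ P * (m'' - 1) := by rw [hD]; nlinarith [hmm]
    omega
  · have hmm : P * m'' ≤ P * (D * (m - 1)) := Nat.mul_le_mul_left _ hge
    have h4 : P * m'' ≤ 2 ^ (L - l) * (m - 1) := by rw [hD]; nlinarith [hmm]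
    omega

lemma sqrt_pow_pos (l : ℕ) : (0 : ℝ) < Real.sqrt (2 ^ (l - 2)) := by
  apply Real.sqrt_pos.mpr; positivity

/-- `H_{1,1} ≡ 1` on the sample range. -/
lemma Hfun_one {L t : ℕ} (ht2 : 2 ≤ t) (htT : t ≤ 2 ^ (L - 1) + 1) :
    Hfun L 1 1 t = 1 := by
  unfold Hfun Ind
  rw [if_pos (by constructor <;> omega)]
  norm_num

lemma Hfun_same_level_mul {L l a b : ℕ} (hab : a ≠ b) (t : ℕ) :
    Hfun L l a t * Hfun L l b t = 0 := by
  unfold Hfun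
  have h0 := Ind_mul_Ind_same_level (L := L) (l := l) hab (t - 1)
  linear_combination (Real.sqrt (2 ^ (l - 2)) * Real.sqrt (2 ^ (l - 2))) * h0

lemma Hfun_eq_inv_smul_sq (L l m : ℕ) (t : ℕ) :
    Hfun L l m t = (Real.sqrt (2 ^ (l - 2)))⁻¹ * (Hfun L l m t * Hfun L l m t) := by
  unfold Hfun
  have hs := sqrt_pow_pos l
  rcases Ind_zero_or_one L l m (t - 1) with h | h <;> rw [h] <;> field_simp <;> norm_num

/-- Cross-level product (raw containment condition). -/
lemma Hfun_mul_cross_raw {L l l' a b : ℕ} (hll : l ≤ l') (hl'L : l' ≤ L) (t : ℕ) :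
    Hfun L l a t * Hfun L l' b t =
      (if 2 ^ (l' - l) * (a - 1) < b ∧ b ≤ 2 ^ (l' - l) * a then
        Real.sqrt (2 ^ (l - 2)) * (Real.sqrt (2 ^ (l' - 2)))⁻¹ else 0) *
      (Hfun L l' b t * Hfun L l' b t) := by
  have hs := sqrt_pow_pos l
  have hs' := sqrt_pow_pos l'
  by_cases hc : 2 ^ (l' - l) * (a - 1) < b ∧ b ≤ 2 ^ (l' - l) * a
  · rw [if_pos hc]
    unfold Hfun
    rcases Ind_zero_or_one L l' b (t - 1) with h | h
    · rw [h]; ring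
    · rw [h, Ind_support_subset hll hl'L hc.1 hc.2 (t - 1) h]
      field_simp
  · rw [if_neg hc]
    have h0 := Ind_mul_Ind_disjoint hll hl'L hc (t - 1)
    unfold Hfun
    linear_combination (Real.sqrt (2 ^ (l - 2)) * Real.sqrt (2 ^ (l' - 2))) * h0

/-- The containment condition is the same for the two children `2k'-1`, `2k'`. -/
lemma cross_cond_iff {l l' a k' b : ℕ} (hll : l < l') (hk' : 1 ≤ k')
    (hb : b = 2 * k' - 1 ∨ b = 2 * k') :
    (2 ^ (l' - l) * (a - 1) < b ∧ b ≤ 2 ^ (l' - l) * a) ↔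
      (2 ^ (l' - l - 1) * (a - 1) < k' ∧ k' ≤ 2 ^ (l' - l - 1) * a) := by
  have h2 : 2 ^ (l' - l) = 2 * 2 ^ (l' - l - 1) := by
    rw [← pow_succ']; congr 1; omega
  rw [h2, mul_assoc, mul_assoc]
  generalize 2 ^ (l' - l - 1) * (a - 1) = u
  generalize 2 ^ (l' - l - 1) * a = v
  rcases hb with rfl | rfl <;> omega

end Scalar

section MixSection

variable {Pb : ℕ} (n L : ℕ) (Z X : ℕ → ℕ → Fin Pb → ℝ)

/-- Mixed empirical matrices. -/
noncomputable def Mix (f g : ℕ → ℝ) : Matrix (Fin Pb) (Fin Pb) ℝ :=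
  ((n * (2 ^ (L - 1)) : ℕ) : ℝ)⁻¹ •
    ∑ i ∈ Finset.range n, ∑ t ∈ Finset.Icc 2 (2 ^ (L - 1) + 1),
      (f t * g t) • Matrix.vecMulVec (Z i t) (X i t)

lemma Mix_self (l m : ℕ) :
    Mix n L Z X (Hfun L l m) (Hfun L l m) = Qmat n L Z X l m := by
  unfold Mix Qmat
  congr 1
  refine Finset.sum_congr rfl fun i _ => Finset.sum_congr rfl fun t _ => ?_
  rw [pow_two]

lemma Mix_congr_smul {f g : ℕ → ℝ} (r : ℝ) (g' : ℕ → ℝ)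
    (h : ∀ t ∈ Finset.Icc 2 (2 ^ (L - 1) + 1), f t * g t = r * (g' t * g' t)) :
    Mix n L Z X f g = r • Mix n L Z X g' g' := by
  unfold Mix
  rw [smul_comm]
  congr 1
  rw [Finset.smul_sum]
  refine Finset.sum_congr rfl fun i _ => ?_
  rw [Finset.smul_sum]
  refine Finset.sum_congr rfl fun t ht => ?_
  rw [h t ht, mul_smul]

lemma Mix_zero {f g : ℕ → ℝ}
    (h : ∀ t ∈ Finset.Icc 2 (2 ^ (L - 1) + 1), f t * g t = 0) :
    Mix n L Z X f g = 0 := by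
  unfold Mix
  have : ∀ i ∈ Finset.range n, (∑ t ∈ Finset.Icc 2 (2 ^ (L - 1) + 1),
      (f t * g t) • Matrix.vecMulVec (Z i t) (X i t)) = 0 := by
    intro i _
    refine Finset.sum_eq_zero fun t ht => ?_
    rw [h t ht, zero_smul]
  rw [Finset.sum_congr rfl this]
  simp

/-- Expansion of the orthonormality double sum into `Mix` matrices. -/
lemma expand_sum (f g f' g' : ℕ → ℝ) (B C B' C' : Matrix (Fin Pb) (Fin Pb) ℝ) :
    ((n * (2 ^ (L - 1)) : ℕ) : ℝ)⁻¹ •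
      ∑ i ∈ Finset.range n, ∑ t ∈ Finset.Icc 2 (2 ^ (L - 1) + 1),
        (f t • B - g t • C)ᵀ * Matrix.vecMulVec (Z i t) (X i t) *
          (f' t • B' - g' t • C')
    = Bᵀ * Mix n L Z X f f' * B' - Bᵀ * Mix n L Z X f g' * C'
      - Cᵀ * Mix n L Z X g f' * B' + Cᵀ * Mix n L Z X g g' * C' := by
  have key : ∀ i t, (f t • B - g t • C)ᵀ * Matrix.vecMulVec (Z i t) (X i t) *
          (f' t • B' - g' t • C')
      = (f t * f' t) • (Bᵀ * Matrix.vecMulVec (Z i t) (X i t) * B')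
        - (f t * g' t) • (Bᵀ * Matrix.vecMulVec (Z i t) (X i t) * C')
        - (g t * f' t) • (Cᵀ * Matrix.vecMulVec (Z i t) (X i t) * B')
        + (g t * g' t) • (Cᵀ * Matrix.vecMulVec (Z i t) (X i t) * C') := by
    intro i t
    simp only [Matrix.transpose_sub, Matrix.transpose_smul, Matrix.sub_mul, Matrix.mul_sub,
      Matrix.smul_mul, _root_.Matrix.mul_smul, smul_smul, smul_sub]
    module
  simp only [key]
  simp only [Finset.sum_add_distrib, Finset.sum_sub_distrib, smul_add, smul_sub]
  unfold Mix
  simp only [Matrix.smul_mul, _root_.Matrix.mul_smul, Matrix.sum_mul, Matrix.mul_sum,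
    smul_smul]

end MixSection

end SAWOrtho

namespace SAWOrtho

section Pair

variable {Pb : ℕ} (n L : ℕ) (Z X : ℕ → ℕ → Fin Pb → ℝ)

/-- `(Q_{l,2k-1}⁻¹ + Q_{l,2k}⁻¹)^{-1/2}`. -/
noncomputable def pairS (l k : ℕ) : Matrix (Fin Pb) (Fin Pb) ℝ :=
  invSqrt ((Qmat n L Z X l (2 * k - 1))⁻¹ + (Qmat n L Z X l (2 * k))⁻¹)

lemma Amat_odd {l k : ℕ} (hl : l ≠ 1) (hk : 1 ≤ k) :
    Amat n L Z X l (2 * k - 1) = (Qmat n L Z X l (2 * k - 1))⁻¹ * pairS n L Z X l k := by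
  unfold Amat pairS
  rw [if_neg hl]
  have h1 : 2 * ((2 * k - 1 + 1) / 2) - 1 = 2 * k - 1 := by omega
  have h2 : 2 * ((2 * k - 1 + 1) / 2) = 2 * k := by omega
  rw [h1, h2]

lemma Amat_even {l k : ℕ} (hl : l ≠ 1) (hk : 1 ≤ k) :
    Amat n L Z X l (2 * k) = (Qmat n L Z X l (2 * k))⁻¹ * pairS n L Z X l k := by
  unfold Amat pairS
  rw [if_neg hl]
  have h1 : 2 * ((2 * k + 1) / 2) - 1 = 2 * k - 1 := by omega
  have h2 : 2 * ((2 * k + 1) / 2) = 2 * k := by omega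
  rw [h1, h2]

lemma QA_odd {l k : ℕ} (hl : l ≠ 1) (hk : 1 ≤ k)
    (h1 : (Qmat n L Z X l (2 * k - 1)).PosDef) :
    Qmat n L Z X l (2 * k - 1) * Amat n L Z X l (2 * k - 1) = pairS n L Z X l k := by
  rw [Amat_odd n L Z X hl hk, ← Matrix.mul_assoc,
    Matrix.mul_nonsing_inv _ h1.det_pos.ne'.isUnit, Matrix.one_mul]

lemma QA_even {l k : ℕ} (hl : l ≠ 1) (hk : 1 ≤ k)
    (h2 : (Qmat n L Z X l (2 * k)).PosDef) :
    Qmat n L Z X l (2 * k) * Amat n L Z X l (2 * k) = pairS n L Z X l k := by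
  rw [Amat_even n L Z X hl hk, ← Matrix.mul_assoc,
    Matrix.mul_nonsing_inv _ h2.det_pos.ne'.isUnit, Matrix.one_mul]

lemma pairS_arg_posdef {l k : ℕ}
    (h1 : (Qmat n L Z X l (2 * k - 1)).PosDef)
    (h2 : (Qmat n L Z X l (2 * k)).PosDef) :
    ((Qmat n L Z X l (2 * k - 1))⁻¹ + (Qmat n L Z X l (2 * k))⁻¹).PosDef :=
  h1.inv.add h2.inv

lemma AtQ_odd {l k : ℕ} (hl : l ≠ 1) (hk : 1 ≤ k)
    (h1 : (Qmat n L Z X l (2 * k - 1)).PosDef)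
    (h2 : (Qmat n L Z X l (2 * k)).PosDef) :
    (Amat n L Z X l (2 * k - 1))ᵀ * Qmat n L Z X l (2 * k - 1) = pairS n L Z X l k := by
  rw [Amat_odd n L Z X hl hk, Matrix.transpose_mul, Matrix.transpose_nonsing_inv,
    posdef_transpose_eq h1]
  have hS : (pairS n L Z X l k)ᵀ = pairS n L Z X l k :=
    invSqrt_symm (pairS_arg_posdef n L Z X h1 h2)
  rw [hS, Matrix.mul_assoc, Matrix.nonsing_inv_mul _ h1.det_pos.ne'.isUnit, Matrix.mul_one]

lemma AtQ_even {l k : ℕ} (hl : l ≠ 1) (hk : 1 ≤ k)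
    (h1 : (Qmat n L Z X l (2 * k - 1)).PosDef)
    (h2 : (Qmat n L Z X l (2 * k)).PosDef) :
    (Amat n L Z X l (2 * k))ᵀ * Qmat n L Z X l (2 * k) = pairS n L Z X l k := by
  rw [Amat_even n L Z X hl hk, Matrix.transpose_mul, Matrix.transpose_nonsing_inv,
    posdef_transpose_eq h2]
  have hS : (pairS n L Z X l k)ᵀ = pairS n L Z X l k :=
    invSqrt_symm (pairS_arg_posdef n L Z X h1 h2)
  rw [hS, Matrix.mul_assoc, Matrix.nonsing_inv_mul _ h2.det_pos.ne'.isUnit, Matrix.mul_one]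

lemma Mix_comm (f g : ℕ → ℝ) : Mix n L Z X f g = Mix n L Z X g f := by
  unfold Mix
  congr 1
  refine Finset.sum_congr rfl fun i _ => Finset.sum_congr rfl fun t _ => ?_
  rw [mul_comm (f t) (g t)]

/-- Cross-level mixed matrix. -/
lemma Mix_cross {l l' a k' b : ℕ} (hll : l < l') (hl'L : l' ≤ L) (hk' : 1 ≤ k')
    (hb : b = 2 * k' - 1 ∨ b = 2 * k') :
    Mix n L Z X (Hfun L l a) (Hfun L l' b) =
      (if 2 ^ (l' - l - 1) * (a - 1) < k' ∧ k' ≤ 2 ^ (l' - l - 1) * a then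
        Real.sqrt (2 ^ (l - 2)) * (Real.sqrt (2 ^ (l' - 2)))⁻¹ else 0) •
      Qmat n L Z X l' b := by
  rw [Mix_congr_smul n L Z X _ (Hfun L l' b) ?_, Mix_self]
  intro t _
  rw [Hfun_mul_cross_raw (le_of_lt hll) hl'L t,
    if_congr (cross_cond_iff hll hk' hb) rfl rfl]

/-- Version of `expand_sum` with matching hypotheses. -/
lemma expand_sum' (W W' : ℕ → Matrix (Fin Pb) (Fin Pb) ℝ) (f g f' g' : ℕ → ℝ)
    (B C B' C' : Matrix (Fin Pb) (Fin Pb) ℝ)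
    (hWt : ∀ t, W t = f t • B - g t • C) (hW't : ∀ t, W' t = f' t • B' - g' t • C') :
    ((n * (2 ^ (L - 1)) : ℕ) : ℝ)⁻¹ •
      ∑ i ∈ Finset.range n, ∑ t ∈ Finset.Icc 2 (2 ^ (L - 1) + 1),
        (W t)ᵀ * Matrix.vecMulVec (Z i t) (X i t) * (W' t)
    = Bᵀ * Mix n L Z X f f' * B' - Bᵀ * Mix n L Z X f g' * C'
      - Cᵀ * Mix n L Z X g f' * B' + Cᵀ * Mix n L Z X g g' * C' := by
  simp only [hWt, hW't]
  exact expand_sum n L Z X f g f' g' B C B' C'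

end Pair

end SAWOrtho

/-- **Orthonormality of the structure-adapted basis matrices**.  If all the
empirical matrices `Q̲_{1,1}` and `Q̲_{l,m}` are symmetric positive definite,
then the basis matrices `W_{l,k}(t)` built from
`A_{1,1} = Q̲_{1,1}^{-1/2}`,
`A_{l,2k-1} = Q̲_{l,2k-1}⁻¹(Q̲_{l,2k-1}⁻¹+Q̲_{l,2k}⁻¹)^{-1/2}` and
`A_{l,2k} = Q̲_{l,2k}⁻¹(Q̲_{l,2k-1}⁻¹+Q̲_{l,2k}⁻¹)^{-1/2}`
satisfy the orthonormality conditions (A) and (B):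
`(n(T-1))⁻¹ Σ_{i,t} W_{l,k}(t)' Z̲_{it} X̲_{it}' W_{l',k'}(t)` equals the
identity if `(l,k) = (l',k')` and zero otherwise. -/
theorem structure_adapted_orthonormality
    {Pb : ℕ} (hPb : 1 ≤ Pb) (n L : ℕ) (hn : 1 ≤ n) (hL : 2 ≤ L)
    (Z X : ℕ → ℕ → Fin Pb → ℝ)
    (hQ11 : (Qmat n L Z X 1 1).PosDef)
    (hQ : ∀ l ∈ Finset.Icc 2 L, ∀ m ∈ Finset.Icc 1 (2 ^ (l - 1)),
      (Qmat n L Z X l m).PosDef) :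
    ∀ l ∈ Finset.Icc 1 L, ∀ k ∈ Finset.Icc 1 (Kl l),
    ∀ l' ∈ Finset.Icc 1 L, ∀ k' ∈ Finset.Icc 1 (Kl l'),
      ((n * (2 ^ (L - 1)) : ℕ) : ℝ)⁻¹ •
          ∑ i ∈ Finset.range n, ∑ t ∈ Finset.Icc 2 (2 ^ (L - 1) + 1),
            (Wmat n L Z X l k t)ᵀ * Matrix.vecMulVec (Z i t) (X i t) *
              Wmat n L Z X l' k' t
        = if (l, k) = (l', k') then (1 : Matrix (Fin Pb) (Fin Pb) ℝ) else 0 := by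
  intro l hl k hk l' hl' k' hk'
  simp only [Finset.mem_Icc] at hl hk hl' hk'
  have hpd : ∀ j m : ℕ, 2 ≤ j → j ≤ L → 1 ≤ m → m ≤ Kl j →
      (Qmat n L Z X j (2 * m - 1)).PosDef ∧ (Qmat n L Z X j (2 * m)).PosDef := by
    intro j m hj hjL hm1 hm2
    unfold Kl at hm2
    have hp : 2 ^ (j - 1) = 2 * 2 ^ (j - 2) := by
      rw [← pow_succ']; congr 1; omega
    constructor <;>
      exact hQ j (Finset.mem_Icc.mpr ⟨hj, hjL⟩) _ (Finset.mem_Icc.mpr ⟨by omega, by omega⟩)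
  by_cases h1 : l = 1 <;> by_cases h1' : l' = 1
  · -- l = 1, l' = 1
    subst h1; subst h1'
    have hk1 : k = 1 := by
      have := hk.2; unfold Kl at this; simp at this; omega
    have hk1' : k' = 1 := by
      have := hk'.2; unfold Kl at this; simp at this; omega
    subst hk1; subst hk1'
    rw [if_pos rfl]
    refine Eq.trans (expand_sum' n L Z X (Wmat n L Z X 1 1) (Wmat n L Z X 1 1)
      (fun _ => (1 : ℝ)) (fun _ => (0 : ℝ)) (fun _ => (1 : ℝ)) (fun _ => (0 : ℝ))
      (Amat n L Z X 1 1) (Amat n L Z X 1 1) (Amat n L Z X 1 1) (Amat n L Z X 1 1)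
      (fun t => by simp [Wmat]) (fun t => by simp [Wmat])) ?_
    have hM11 : Mix n L Z X (fun _ => (1 : ℝ)) (fun _ => (1 : ℝ)) = Qmat n L Z X 1 1 := by
      rw [Mix_congr_smul n L Z X (1 : ℝ) (Hfun L 1 1)
        (by
          intro t ht
          rw [Finset.mem_Icc] at ht
          rw [Hfun_one ht.1 ht.2]; ring), one_smul, Mix_self]
    have hM0 : Mix n L Z X (fun _ => (1 : ℝ)) (fun _ => (0 : ℝ)) = 0 :=
      Mix_zero n L Z X (by intro t _; ring)
    have hM0' : ∀ f : ℕ → ℝ, Mix n L Z X (fun _ => (0 : ℝ)) f = 0 :=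
      fun f => Mix_zero n L Z X (by intro t _; ring)
    rw [hM11, hM0, hM0' _, hM0' _]
    simp only [Matrix.mul_zero, Matrix.zero_mul, sub_zero, add_zero]
    have hA : Amat n L Z X 1 1 = invSqrt (Qmat n L Z X 1 1) := by
      unfold Amat; rw [if_pos rfl]
    rw [hA, invSqrt_symm hQ11, invSqrt_mul_self_mul hQ11]
  · -- l = 1, l' ≥ 2
    subst h1
    have hl2' : 2 ≤ l' := by omega
    obtain ⟨hp1', hp2'⟩ := hpd l' k' hl2' hl'.2 hk'.1 hk'.2
    rw [if_neg (by simp only [Prod.mk.injEq]; omega)]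
    refine Eq.trans (expand_sum' n L Z X (Wmat n L Z X 1 k) (Wmat n L Z X l' k')
      (fun _ => (1 : ℝ)) (fun _ => (0 : ℝ))
      (Hfun L l' (2 * k' - 1)) (Hfun L l' (2 * k'))
      (Amat n L Z X 1 1) (Amat n L Z X 1 1)
      (Amat n L Z X l' (2 * k' - 1)) (Amat n L Z X l' (2 * k'))
      (fun t => by simp [Wmat]) (fun t => by unfold Wmat; rw [if_neg h1'])) ?_
    have hModd : Mix n L Z X (fun _ => (1 : ℝ)) (Hfun L l' (2 * k' - 1)) =
        (Real.sqrt (2 ^ (l' - 2)))⁻¹ • Qmat n L Z X l' (2 * k' - 1) := by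
      rw [Mix_congr_smul n L Z X _ (Hfun L l' (2 * k' - 1))
        (by intro t _; rw [one_mul]; exact Hfun_eq_inv_smul_sq L l' (2 * k' - 1) t),
        Mix_self]
    have hMeven : Mix n L Z X (fun _ => (1 : ℝ)) (Hfun L l' (2 * k')) =
        (Real.sqrt (2 ^ (l' - 2)))⁻¹ • Qmat n L Z X l' (2 * k') := by
      rw [Mix_congr_smul n L Z X _ (Hfun L l' (2 * k'))
        (by intro t _; rw [one_mul]; exact Hfun_eq_inv_smul_sq L l' (2 * k') t),
        Mix_self]
    have hM0' : ∀ f : ℕ → ℝ, Mix n L Z X (fun _ => (0 : ℝ)) f = 0 :=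
      fun f => Mix_zero n L Z X (by intro t _; ring)
    rw [hModd, hMeven, hM0' _, hM0' _]
    simp only [Matrix.mul_zero, Matrix.zero_mul, sub_zero, add_zero,
      Matrix.smul_mul, _root_.Matrix.mul_smul, Matrix.mul_assoc]
    rw [QA_odd n L Z X h1' hk'.1 hp1', QA_even n L Z X h1' hk'.1 hp2', sub_self]
  · -- l ≥ 2, l' = 1
    subst h1'
    have hl2 : 2 ≤ l := by omega
    obtain ⟨hp1, hp2⟩ := hpd l k hl2 hl.2 hk.1 hk.2
    rw [if_neg (by simp only [Prod.mk.injEq]; omega)]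
    refine Eq.trans (expand_sum' n L Z X (Wmat n L Z X l k) (Wmat n L Z X 1 k')
      (Hfun L l (2 * k - 1)) (Hfun L l (2 * k))
      (fun _ => (1 : ℝ)) (fun _ => (0 : ℝ))
      (Amat n L Z X l (2 * k - 1)) (Amat n L Z X l (2 * k))
      (Amat n L Z X 1 1) (Amat n L Z X 1 1)
      (fun t => by unfold Wmat; rw [if_neg h1]) (fun t => by simp [Wmat])) ?_
    have hModd : Mix n L Z X (Hfun L l (2 * k - 1)) (fun _ => (1 : ℝ)) =
        (Real.sqrt (2 ^ (l - 2)))⁻¹ • Qmat n L Z X l (2 * k - 1) := by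
      rw [Mix_comm, Mix_congr_smul n L Z X _ (Hfun L l (2 * k - 1))
        (by intro t _; rw [one_mul]; exact Hfun_eq_inv_smul_sq L l (2 * k - 1) t),
        Mix_self]
    have hMeven : Mix n L Z X (Hfun L l (2 * k)) (fun _ => (1 : ℝ)) =
        (Real.sqrt (2 ^ (l - 2)))⁻¹ • Qmat n L Z X l (2 * k) := by
      rw [Mix_comm, Mix_congr_smul n L Z X _ (Hfun L l (2 * k))
        (by intro t _; rw [one_mul]; exact Hfun_eq_inv_smul_sq L l (2 * k) t),
        Mix_self]
    have hM0 : ∀ f : ℕ → ℝ, Mix n L Z X f (fun _ => (0 : ℝ)) = 0 :=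
      fun f => Mix_zero n L Z X (by intro t _; ring)
    rw [hModd, hMeven, hM0 _, hM0 _]
    simp only [Matrix.mul_zero, Matrix.zero_mul, sub_zero, add_zero,
      Matrix.smul_mul, _root_.Matrix.mul_smul]
    rw [AtQ_odd n L Z X h1 hk.1 hp1 hp2, AtQ_even n L Z X h1 hk.1 hp1 hp2, sub_self]
  · -- l ≥ 2, l' ≥ 2
    have hl2 : 2 ≤ l := by omega
    have hl2' : 2 ≤ l' := by omega
    obtain ⟨hp1, hp2⟩ := hpd l k hl2 hl.2 hk.1 hk.2
    obtain ⟨hp1', hp2'⟩ := hpd l' k' hl2' hl'.2 hk'.1 hk'.2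
    refine Eq.trans (expand_sum' n L Z X (Wmat n L Z X l k) (Wmat n L Z X l' k')
      (Hfun L l (2 * k - 1)) (Hfun L l (2 * k))
      (Hfun L l' (2 * k' - 1)) (Hfun L l' (2 * k'))
      (Amat n L Z X l (2 * k - 1)) (Amat n L Z X l (2 * k))
      (Amat n L Z X l' (2 * k' - 1)) (Amat n L Z X l' (2 * k'))
      (fun t => by unfold Wmat; rw [if_neg h1]) (fun t => by unfold Wmat; rw [if_neg h1'])) ?_
    rcases lt_trichotomy l l' with hlt | heq | hgt
    · -- l < l'
      rw [if_neg (by simp only [Prod.mk.injEq]; omega)]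
      rw [Mix_cross n L Z X hlt hl'.2 hk'.1 (Or.inl rfl),
        Mix_cross n L Z X hlt hl'.2 hk'.1 (Or.inr rfl),
        Mix_cross n L Z X hlt hl'.2 hk'.1 (Or.inl rfl),
        Mix_cross n L Z X hlt hl'.2 hk'.1 (Or.inr rfl)]
      simp only [Matrix.smul_mul, _root_.Matrix.mul_smul, Matrix.mul_assoc]
      rw [QA_odd n L Z X h1' hk'.1 hp1', QA_even n L Z X h1' hk'.1 hp2']
      abel
    · -- l = l'
      subst heq
      by_cases hkk : k = k'
      · subst hkk
        rw [if_pos rfl]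
        have hz1 : Mix n L Z X (Hfun L l (2 * k - 1)) (Hfun L l (2 * k)) = 0 :=
          Mix_zero n L Z X (fun t _ => Hfun_same_level_mul (by omega) t)
        have hz2 : Mix n L Z X (Hfun L l (2 * k)) (Hfun L l (2 * k - 1)) = 0 :=
          Mix_zero n L Z X (fun t _ => Hfun_same_level_mul (by omega) t)
        rw [Mix_self n L Z X l (2 * k - 1), Mix_self n L Z X l (2 * k), hz1, hz2]
        simp only [Matrix.mul_zero, Matrix.zero_mul, sub_zero, add_zero]
        rw [AtQ_odd n L Z X h1 hk.1 hp1 hp2, AtQ_even n L Z X h1 hk.1 hp1 hp2,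
          Amat_odd n L Z X h1 hk.1, Amat_even n L Z X h1 hk.1]
        have harg := pairS_arg_posdef n L Z X hp1 hp2
        have hstep : pairS n L Z X l k * ((Qmat n L Z X l (2 * k - 1))⁻¹ * pairS n L Z X l k)
            + pairS n L Z X l k * ((Qmat n L Z X l (2 * k))⁻¹ * pairS n L Z X l k)
            = invSqrt ((Qmat n L Z X l (2 * k - 1))⁻¹ + (Qmat n L Z X l (2 * k))⁻¹) *
              ((Qmat n L Z X l (2 * k - 1))⁻¹ + (Qmat n L Z X l (2 * k))⁻¹) *
              invSqrt ((Qmat n L Z X l (2 * k - 1))⁻¹ + (Qmat n L Z X l (2 * k))⁻¹) := by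
          unfold pairS; noncomm_ring
        rw [hstep, invSqrt_mul_self_mul harg]
      · rw [if_neg (by simp only [Prod.mk.injEq]; omega)]
        have hz : ∀ a b : ℕ, a ≠ b →
            Mix n L Z X (Hfun L l a) (Hfun L l b) = 0 :=
          fun a b hab => Mix_zero n L Z X (fun t _ => Hfun_same_level_mul hab t)
        rw [hz _ _ (by omega), hz _ _ (by omega), hz _ _ (by omega), hz _ _ (by omega)]
        simp
    · -- l' < l
      rw [if_neg (by simp only [Prod.mk.injEq]; omega)]
      rw [Mix_comm n L Z X (Hfun L l (2 * k - 1)) (Hfun L l' (2 * k' - 1)),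
        Mix_comm n L Z X (Hfun L l (2 * k - 1)) (Hfun L l' (2 * k')),
        Mix_comm n L Z X (Hfun L l (2 * k)) (Hfun L l' (2 * k' - 1)),
        Mix_comm n L Z X (Hfun L l (2 * k)) (Hfun L l' (2 * k'))]
      rw [Mix_cross n L Z X hgt hl.2 hk.1 (Or.inl rfl),
        Mix_cross n L Z X hgt hl.2 hk.1 (Or.inr rfl),
        Mix_cross n L Z X hgt hl.2 hk.1 (Or.inl rfl),
        Mix_cross n L Z X hgt hl.2 hk.1 (Or.inr rfl)]
      simp only [Matrix.smul_mul, _root_.Matrix.mul_smul]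
      rw [AtQ_odd n L Z X h1 hk.1 hp1 hp2, AtQ_even n L Z X h1 hk.1 hp1 hp2]
      abel
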